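/- Let ÷ be an AGM contraction operator with contraction-compatible faithful assignment Ψ ↦ ≤_Ψ. Then ÷ satisfies (IC1): if ¬α ⊨ β then Bel(Ψ ÷ α ÷ β) =_α Bel(Ψ ÷ β), if and only if the assignment satisfies (IC1^rel): for all ω₁, ω₂ ⊨ α, ω₁ ≤_Ψ ω₂ iff ω₁ ≤_{Ψ÷α} ω₂. -/
import Mathlib


inductive Form (V : Type) : Type
  | var : V → Form V
  | falsum : Form V
  | imp : Form V → Form V → Form V

namespace Form

def eval {V : Type} (w : V → Bool) : Form V → Bool
  | var v => w v
  | falsum => false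
  | imp a b => !(eval w a) || eval w b

def neg {V : Type} (a : Form V) : Form V := imp a falsum

def top {V : Type} : Form V := neg falsum

def conj {V : Type} (a b : Form V) : Form V := neg (imp a (neg b))

end Form

/-- Worlds (propositional interpretations) over the signature `V`. -/
abbrev World (V : Type) := V → Bool

/-- Models of a single formula. -/
def FMod {V : Type} (a : Form V) : Set (World V) := {w | a.eval w = true}

/-- Models of a set of formulas. -/
def SMod {V : Type} (X : Set (Form V)) : Set (World V) := {w | ∀ a ∈ X, a.eval w = true}

/-- Deductive closure (consequence operator). -/
def Cn {V : Type} (X : Set (Form V)) : Set (Form V) := {b | ∀ w ∈ SMod X, b.eval w = true}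

/-- Minimal elements of a set of worlds w.r.t. a relation. -/
def minSet {V : Type} (S : Set (World V)) (r : World V → World V → Prop) : Set (World V) :=
  {w ∈ S | ∀ w' ∈ S, r w w'}

/-- Total preorder: total (hence reflexive) and transitive. -/
def TotalPre {V : Type} (r : World V → World V → Prop) : Prop :=
  (∀ x y, r x y ∨ r y x) ∧ (∀ x y z, r x y → r y z → r x z)

/-- A belief change operator over epistemic states `E`: each state has a
deductively closed belief set, and the operator maps a state and a formula to a state. -/
structure BCO (V E : Type) where
  Bel : E → Set (Form V)
  closed : ∀ Ψ, Cn (Bel Ψ) = Bel Ψ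
  op : E → Form V → E

/-- Models of (the belief set of) an epistemic state. -/
def stMod {V E : Type} (O : BCO V E) (Ψ : E) : Set (World V) := SMod (O.Bel Ψ)

/-- Faithful assignment: each `le Ψ` is a total preorder; models of `Ψ` are mutually
equivalent and strictly below non-models. -/
def Faithful {V E : Type} (O : BCO V E) (le : E → World V → World V → Prop) : Prop :=
  (∀ Ψ, TotalPre (le Ψ)) ∧
  (∀ Ψ w₁ w₂, w₁ ∈ stMod O Ψ → w₂ ∈ stMod O Ψ → le Ψ w₁ w₂) ∧
  (∀ Ψ w₁ w₂, w₁ ∈ stMod O Ψ → w₂ ∉ stMod O Ψ → (le Ψ w₁ w₂ ∧ ¬ le Ψ w₂ w₁))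

/-- Contraction-compatibility: `[[Ψ ÷ α]] = [[Ψ]] ∪ min([[¬α]], ≤_Ψ)`. -/
def ContrCompat {V E : Type} (O : BCO V E) (le : E → World V → World V → Prop) : Prop :=
  ∀ Ψ (α : Form V), stMod O (O.op Ψ α) = stMod O Ψ ∪ minSet (FMod α.neg) (le Ψ)

/-- Revision-compatibility: `[[Ψ * α]] = min([[α]], ≤_Ψ)`. -/
def RevCompat {V E : Type} (O : BCO V E) (le : E → World V → World V → Prop) : Prop :=
  ∀ Ψ (α : Form V), stMod O (O.op Ψ α) = minSet (FMod α) (le Ψ)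

/-- The AGM contraction postulates (C1)–(C7) for epistemic states. -/
def AGMContr {V E : Type} (O : BCO V E) : Prop :=
  (∀ Ψ α, O.Bel (O.op Ψ α) ⊆ O.Bel Ψ) ∧
  (∀ Ψ α, α ∉ O.Bel Ψ → O.Bel Ψ ⊆ O.Bel (O.op Ψ α)) ∧
  (∀ Ψ (α : Form V), ¬ (∀ w, w ∈ FMod α) → α ∉ O.Bel (O.op Ψ α)) ∧
  (∀ Ψ α, O.Bel Ψ ⊆ Cn (O.Bel (O.op Ψ α) ∪ {α})) ∧
  (∀ Ψ α β, FMod α = FMod β → O.Bel (O.op Ψ α) = O.Bel (O.op Ψ β)) ∧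
  (∀ Ψ (α β : Form V), O.Bel (O.op Ψ α) ∩ O.Bel (O.op Ψ β) ⊆ O.Bel (O.op Ψ (α.conj β))) ∧
  (∀ Ψ (α β : Form V), β ∉ O.Bel (O.op Ψ (α.conj β)) → O.Bel (O.op Ψ (α.conj β)) ⊆ O.Bel (O.op Ψ β))

/-- Unbiasedness: every consistent set of formulas has an epistemic state whose
belief set is its deductive closure. -/
def Unbiased {V E : Type} (O : BCO V E) : Prop :=
  ∀ L : Set (Form V), (SMod L).Nonempty → ∃ Ψ : E, O.Bel Ψ = Cn L


lemma Form.eval_neg' {V : Type} (w : World V) (a : Form V) : a.neg.eval w = !a.eval w := by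
  simp [Form.neg, Form.eval]

lemma Form.eval_conj' {V : Type} (w : World V) (a b : Form V) :
    (a.conj b).eval w = (a.eval w && b.eval w) := by
  simp [Form.conj, Form.neg, Form.eval]

lemma FMod_neg {V : Type} (a : Form V) : FMod a.neg = (FMod a)ᶜ := by
  ext w; simp [FMod, Form.eval_neg']

def lit {V : Type} (ω : World V) (v : V) : Form V :=
  if ω v then Form.var v else (Form.var v).neg

lemma eval_lit {V : Type} (ω w : World V) (v : V) :
    (lit ω v).eval w = true ↔ w v = ω v := by
  by_cases h : ω v = true <;> simp [lit, h, Form.eval_neg', Form.eval]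

def conjList {V : Type} : List (Form V) → Form V
  | [] => Form.top
  | a :: l => a.conj (conjList l)

lemma eval_conjList {V : Type} (w : World V) (l : List (Form V)) :
    (conjList l).eval w = true ↔ ∀ a ∈ l, a.eval w = true := by
  induction l with
  | nil => simp [conjList, Form.top, Form.eval_neg', Form.eval]
  | cons a l ih => simp [conjList, Form.eval_conj', ih]

noncomputable def descr {V : Type} [Fintype V] (ω : World V) : Form V :=
  conjList ((Finset.univ : Finset V).toList.map (lit ω))

lemma FMod_descr {V : Type} [Fintype V] (ω : World V) : FMod (descr ω) = {ω} := by
  ext w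
  simp only [FMod, descr, Set.mem_setOf_eq, Set.mem_singleton_iff, eval_conjList,
    List.mem_map]
  constructor
  · intro h
    funext v
    exact (eval_lit ω w v).mp (h _ ⟨v, by simp, rfl⟩)
  · rintro rfl a ⟨v, -, rfl⟩
    exact (eval_lit _ _ v).mpr rfl

def disj {V : Type} (a b : Form V) : Form V := Form.imp a.neg b

lemma eval_disj {V : Type} (w : World V) (a b : Form V) :
    (disj a b).eval w = (a.eval w || b.eval w) := by
  simp [disj, Form.eval, Form.eval_neg']

lemma FMod_disj {V : Type} (a b : Form V) : FMod (disj a b) = FMod a ∪ FMod b := by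
  ext w; simp [FMod, eval_disj]

/-- (IC1) holds iff the assignment satisfies (IC1ʳᵉˡ). -/
theorem stmt_16 {V E : Type} [Fintype V] (O : BCO V E)
    (le : E → World V → World V → Prop)
    (hA : AGMContr O) (hF : Faithful O le) (hC : ContrCompat O le) :
    (∀ (Ψ : E) (α β : Form V), FMod α.neg ⊆ FMod β →
        SMod (O.Bel (O.op (O.op Ψ α) β)) ∩ FMod α = SMod (O.Bel (O.op Ψ β)) ∩ FMod α) ↔
    (∀ (Ψ : E) (α : Form V) (ω₁ ω₂ : World V),
        ω₁ ∈ FMod α → ω₂ ∈ FMod α → (le Ψ ω₁ ω₂ ↔ le (O.op Ψ α) ω₁ ω₂)) := by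
  have lerefl : ∀ Ψ w, le Ψ w w := fun Ψ w => ((hF.1 Ψ).1 w w).elim id id
  constructor
  · -- (IC1) → (IC1ʳᵉˡ)
    intro h Ψ α ω₁ ω₂ h1 h2
    have hno1 : ω₁ ∉ FMod α.neg := by rw [FMod_neg]; simpa using h1
    have hno2 : ω₂ ∉ FMod α.neg := by rw [FMod_neg]; simpa using h2
    by_cases p1 : ω₁ ∈ stMod O Ψ <;> by_cases p2 : ω₂ ∈ stMod O Ψ
    · have m1 : ω₁ ∈ stMod O (O.op Ψ α) := by rw [hC]; exact Or.inl p1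
      have m2 : ω₂ ∈ stMod O (O.op Ψ α) := by rw [hC]; exact Or.inl p2
      exact ⟨fun _ => hF.2.1 _ _ _ m1 m2, fun _ => hF.2.1 _ _ _ p1 p2⟩
    · have m2 : ω₂ ∉ stMod O (O.op Ψ α) := by
        rw [hC]; rintro (h' | h')
        · exact p2 h'
        · exact hno2 h'.1
      have m1 : ω₁ ∈ stMod O (O.op Ψ α) := by rw [hC]; exact Or.inl p1
      exact ⟨fun _ => (hF.2.2 _ _ _ m1 m2).1, fun _ => (hF.2.2 _ _ _ p1 p2).1⟩
    · have m1 : ω₁ ∉ stMod O (O.op Ψ α) := by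
        rw [hC]; rintro (h' | h')
        · exact p1 h'
        · exact hno1 h'.1
      have m2 : ω₂ ∈ stMod O (O.op Ψ α) := by rw [hC]; exact Or.inl p2
      constructor
      · intro hle; exact absurd hle (hF.2.2 _ _ _ p2 p1).2
      · intro hle; exact absurd hle (hF.2.2 _ _ _ m2 m1).2
    · -- neither model of Ψ : use the pair formula
      set γ : Form V := disj (descr ω₁) (descr ω₂) with hγdef
      set β : Form V := γ.neg with hβdef
      have hFγ : FMod γ = {ω₁, ω₂} := by
        rw [hγdef, FMod_disj, FMod_descr, FMod_descr, Set.singleton_union]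
      have hβn : FMod β.neg = {ω₁, ω₂} := by
        rw [hβdef, FMod_neg, FMod_neg, compl_compl, hFγ]
      have hsub : FMod α.neg ⊆ FMod β := by
        rw [hβdef, FMod_neg, FMod_neg, hFγ]
        apply Set.compl_subset_compl.mpr
        rintro w (rfl | hw)
        · exact h1
        · rw [Set.mem_singleton_iff] at hw; subst hw; exact h2
      have key : stMod O (O.op (O.op Ψ α) β) ∩ FMod α = stMod O (O.op Ψ β) ∩ FMod α :=
        h Ψ α β hsub
      rw [hC (O.op Ψ α) β, hC Ψ α, hC Ψ β, hβn] at key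
      have hmem := Set.ext_iff.mp key ω₁
      have hMα : ω₁ ∉ minSet (FMod α.neg) (le Ψ) := fun h' => hno1 h'.1
      have aux : ∀ Ψ' : E, ω₁ ∈ minSet ({ω₁, ω₂} : Set (World V)) (le Ψ') ↔ le Ψ' ω₁ ω₂ := by
        intro Ψ'
        constructor
        · intro h'; exact h'.2 ω₂ (Or.inr rfl)
        · intro h'
          refine ⟨Or.inl rfl, ?_⟩
          rintro w' (rfl | hw)
          · exact lerefl _ _
          · rw [Set.mem_singleton_iff] at hw; subst hw; exact h'
      have e1 : ω₁ ∈ minSet ({ω₁, ω₂} : Set (World V)) (le (O.op Ψ α)) ↔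
          ω₁ ∈ minSet ({ω₁, ω₂} : Set (World V)) (le Ψ) := by
        constructor
        · intro hm
          have := hmem.mp ⟨Or.inr hm, h1⟩
          rcases this.1 with hP | hM
          · exact absurd hP p1
          · exact hM
        · intro hm
          have := hmem.mpr ⟨Or.inr hm, h1⟩
          rcases this.1 with (hP | hM') | hM
          · exact absurd hP p1
          · exact absurd hM' hMα
          · exact hM
      rw [← aux Ψ, ← aux (O.op Ψ α)]
      exact e1.symm
  · -- (IC1ʳᵉˡ) → (IC1)
    intro h Ψ α β hsub
    show stMod O (O.op (O.op Ψ α) β) ∩ FMod α = stMod O (O.op Ψ β) ∩ FMod α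
    have hβα : FMod β.neg ⊆ FMod α := by
      rw [FMod_neg] at hsub ⊢
      intro w hw
      by_contra hc
      exact hw (hsub hc)
    have hmin_eq : minSet (FMod β.neg) (le (O.op Ψ α)) = minSet (FMod β.neg) (le Ψ) := by
      ext w
      constructor
      · rintro ⟨hw, hmin⟩
        exact ⟨hw, fun w' hw' => (h Ψ α w w' (hβα hw) (hβα hw')).mpr (hmin w' hw')⟩
      · rintro ⟨hw, hmin⟩
        exact ⟨hw, fun w' hw' => (h Ψ α w w' (hβα hw) (hβα hw')).mp (hmin w' hw')⟩
    rw [hC (O.op Ψ α) β, hC Ψ α, hC Ψ β, hmin_eq]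
    ext w
    simp only [Set.mem_inter_iff, Set.mem_union]
    constructor
    · rintro ⟨(hP | hMα) | hM, hA'⟩
      · exact ⟨Or.inl hP, hA'⟩
      · have := hMα.1
        rw [FMod_neg] at this
        exact absurd hA' this
      · exact ⟨Or.inr hM, hA'⟩
    · rintro ⟨hP | hM, hA'⟩
      · exact ⟨Or.inl (Or.inl hP), hA'⟩
      · exact ⟨Or.inr hM, hA'⟩
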